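/- arXiv:2010.10165 — 4 statements merged into one kernel-verified Lean document; each statement's English description precedes it below -/
import Mathlib

section
/- Let T : X → Y be a continuous linear map between Banach spaces that admits a generalized-inverse block factorization: there exist Banach spaces Z⁺, Z⁻ and continuous linear maps T⁺, T⁻, S, S⁻, S⁺ such that the block matrix (T, T⁺; T⁻, 0) : X × Z⁺ → Y × Z⁻ is invertible with inverse (S, S⁻; S⁺, 0). Then the kernel of T is a closed complemented subspace of X and the image of T is a closed complemented subspace of Y; in fact T ∘ S and S ∘ T are continuous idempotents with range(T ∘ S) = range T and kernel(S ∘ T) = kernel T. -/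
open ContinuousLinearMap

/-- **Regularity from a generalized-inverse block factorization.**
If the block operator `(T, T⁺; T⁻, 0) : X × Z⁺ → Y × Z⁻` between Banach spaces is invertible
with inverse of block form `(S, S⁻; S⁺, 0)`, then the kernel of `T` is a closed complemented
subspace of `X` and the image of `T` is a closed complemented subspace of `Y`; in fact
`T ∘ S` and `S ∘ T` are continuous idempotents with `range (T ∘ S) = range T` and
`ker (S ∘ T) = ker T`. -/
theorem regular_of_block_factorization
    {X Y Zp Zm : Type*}
    [NormedAddCommGroup X] [NormedSpace ℝ X] [CompleteSpace X]
    [NormedAddCommGroup Y] [NormedSpace ℝ Y] [CompleteSpace Y]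
    [NormedAddCommGroup Zp] [NormedSpace ℝ Zp] [CompleteSpace Zp]
    [NormedAddCommGroup Zm] [NormedSpace ℝ Zm] [CompleteSpace Zm]
    (T : X →L[ℝ] Y) (Tp : Zp →L[ℝ] Y) (Tm : X →L[ℝ] Zm)
    (S : Y →L[ℝ] X) (Sm : Zm →L[ℝ] X) (Sp : Y →L[ℝ] Zp)
    (hinv₁ : ∀ p : X × Zp,
      (S (T p.1 + Tp p.2) + Sm (Tm p.1), Sp (T p.1 + Tp p.2)) = p)
    (hinv₂ : ∀ q : Y × Zm,
      (T (S q.1 + Sm q.2) + Tp (Sp q.1), Tm (S q.1 + Sm q.2)) = q) :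
    IsClosed (LinearMap.ker (T : X →ₗ[ℝ] Y) : Set X) ∧
    (LinearMap.ker (T : X →ₗ[ℝ] Y)).ClosedComplemented ∧
    IsClosed (LinearMap.range (T : X →ₗ[ℝ] Y) : Set Y) ∧
    (LinearMap.range (T : X →ₗ[ℝ] Y)).ClosedComplemented ∧
    (T ∘L S) ∘L (T ∘L S) = T ∘L S ∧
    (S ∘L T) ∘L (S ∘L T) = S ∘L T ∧
    LinearMap.range ((T ∘L S : Y →L[ℝ] Y) : Y →ₗ[ℝ] Y) = LinearMap.range (T : X →ₗ[ℝ] Y) ∧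
    LinearMap.ker ((S ∘L T : X →L[ℝ] X) : X →ₗ[ℝ] X) = LinearMap.ker (T : X →ₗ[ℝ] Y) := by
  -- basic identities
  have h1 : ∀ x : X, S (T x) + Sm (Tm x) = x := by
    intro x
    have := congrArg Prod.fst (hinv₁ (x, 0))
    simpa using this
  have h2 : ∀ x : X, Sp (T x) = 0 := by
    intro x
    have := congrArg Prod.snd (hinv₁ (x, 0))
    simpa using this
  have h3 : ∀ y : Y, T (S y) + Tp (Sp y) = y := by
    intro y
    have := congrArg Prod.fst (hinv₂ (y, 0))
    simpa using this
  have h4 : ∀ y : Y, Tm (S y) = 0 := by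
    intro y
    have := congrArg Prod.snd (hinv₂ (y, 0))
    simpa using this
  have h5 : ∀ z : Zm, T (Sm z) = 0 := by
    intro z
    have := congrArg Prod.fst (hinv₂ (0, z))
    simpa using this
  -- T S T = T
  have hTST : ∀ x : X, T (S (T x)) = T x := by
    intro x
    have := h3 (T x)
    rw [h2 x] at this
    simpa using this
  -- S T S = S
  have hSTS : ∀ y : Y, S (T (S y)) = S y := by
    intro y
    have := h1 (S y)
    rw [h4 y] at this
    simpa using this
  have hPidem : (T ∘L S) ∘L (T ∘L S) = T ∘L S := by
    ext y; simp [hTST]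
  have hQidem : (S ∘L T) ∘L (S ∘L T) = S ∘L T := by
    ext x; simp [hSTS]
  have hrange : LinearMap.range ((T ∘L S : Y →L[ℝ] Y) : Y →ₗ[ℝ] Y) = LinearMap.range (T : X →ₗ[ℝ] Y) := by
    apply le_antisymm
    · rintro _ ⟨y, rfl⟩
      exact ⟨S y, rfl⟩
    · rintro _ ⟨x, rfl⟩
      exact ⟨T x, by simp [hTST]⟩
  have hker : LinearMap.ker ((S ∘L T : X →L[ℝ] X) : X →ₗ[ℝ] X) = LinearMap.ker (T : X →ₗ[ℝ] Y) := by
    apply le_antisymm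
    · intro x hx
      have hx' : S (T x) = 0 := hx
      have := h1 x
      rw [hx', zero_add] at this
      show T x = 0
      calc T x = T (Sm (Tm x)) := by rw [this]
        _ = 0 := h5 _
    · intro x hx
      have hx' : T x = 0 := hx
      show S (T x) = 0
      rw [hx', map_zero]
  -- projection onto ker T
  have hkerCC : (LinearMap.ker (T : X →ₗ[ℝ] Y)).ClosedComplemented := by
    refine ⟨(ContinuousLinearMap.id ℝ X - S ∘L T).codRestrict (LinearMap.ker (T : X →ₗ[ℝ] Y)) ?_, ?_⟩
    · intro x
      show T (x - S (T x)) = 0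
      rw [map_sub, hTST, sub_self]
    · intro x
      ext
      have hx : T (x : X) = 0 := x.2
      show (x : X) - S (T (x : X)) = (x : X)
      rw [hx, map_zero, sub_zero]
  -- projection onto range T
  have hrangeCC : (LinearMap.range (T : X →ₗ[ℝ] Y)).ClosedComplemented := by
    refine ⟨(T ∘L S).codRestrict (LinearMap.range (T : X →ₗ[ℝ] Y)) (fun y => ⟨S y, rfl⟩), ?_⟩
    · rintro ⟨_, x, rfl⟩
      ext
      exact hTST x
  exact ⟨hkerCC.isClosed, hkerCC, hrangeCC.isClosed, hrangeCC, hPidem, hQidem, hrange, hker⟩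
end

section
/- Let T : P × X → Y be a family of continuous linear maps between Banach spaces, continuous in the parameter p, with T₀ a Fredholm operator. Suppose T is uniformly regular at 0, i.e., there are decompositions X = ker T₀ ⊕ coim T₀, Y = coker T₀ ⊕ im T₀ such that T̃ₚ = pr_{im T₀} ∘ Tₚ|_{coim T₀} is a topological isomorphism for every p ∈ P. Then Tₚ is Fredholm for every p ∈ P and ind Tₚ = ind T₀. -/
open Submodule LinearMap

set_option maxHeartbeats 1000000 in
theorem fredholm_aux {X Y : Type*}
    [NormedAddCommGroup X] [NormedSpace ℝ X] [CompleteSpace X]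
    [NormedAddCommGroup Y] [NormedSpace ℝ Y] [CompleteSpace Y]
    (K C : Submodule ℝ X) (Q R : Submodule ℝ Y)
    [FiniteDimensional ℝ K] (hRclosed : IsClosed (R : Set Y))
    [hQuotFin : FiniteDimensional ℝ (Y ⧸ R)]
    (hC : IsCompl K C) (hQ : IsCompl Q R)
    (Tp : X →L[ℝ] Y)
    (e : C ≃L[ℝ] R)
    (he : ∀ c : C, (e c : Y) = ((Submodule.linearProjOfIsCompl R Q hQ.symm) (Tp (c : X)) : Y)) :
    FiniteDimensional ℝ (LinearMap.ker (Tp : X →ₗ[ℝ] Y)) ∧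
    IsClosed ((LinearMap.range (Tp : X →ₗ[ℝ] Y) : Submodule ℝ Y) : Set Y) ∧
    FiniteDimensional ℝ (Y ⧸ LinearMap.range (Tp : X →ₗ[ℝ] Y)) ∧
    (Module.finrank ℝ (LinearMap.ker (Tp : X →ₗ[ℝ] Y)) : ℤ) - Module.finrank ℝ (Y ⧸ LinearMap.range (Tp : X →ₗ[ℝ] Y))
      = (Module.finrank ℝ K : ℤ) - Module.finrank ℝ (Y ⧸ R) := by
  classical
  -- Q is finite dimensional
  haveI hQfin : FiniteDimensional ℝ Q :=
    LinearEquiv.finiteDimensional (Submodule.quotientEquivOfIsCompl R Q hQ.symm)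
  have hQclosed : IsClosed (Q : Set Y) := Q.closed_of_finiteDimensional
  -- continuous projection onto R
  set ρ : Y →L[ℝ] R := R.linearProjOfClosedCompl Q hQ.symm hRclosed hQclosed with hρ
  have hρcoe : ⇑ρ = ⇑(Submodule.linearProjOfIsCompl R Q hQ.symm) := by
    rw [hρ]; exact Submodule.coe_continuous_linearProjOfClosedCompl' hQ.symm hRclosed hQclosed
  have he' : ∀ c : C, ρ (Tp (c : X)) = e c := by
    intro c
    apply Subtype.ext
    rw [show ρ (Tp (c:X)) = Submodule.linearProjOfIsCompl R Q hQ.symm (Tp (c:X)) from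
      congrFun hρcoe _]
    exact (he c).symm
  have hρR : ∀ r : R, ρ (r : Y) = r := fun r => by
    apply Subtype.ext
    rw [show ρ ((r : Y)) = Submodule.linearProjOfIsCompl R Q hQ.symm ((r : Y)) from
      congrFun hρcoe _]
    exact congrArg _ (Submodule.linearProjOfIsCompl_apply_left hQ.symm r)
  -- the nilpotent correction N
  set N : Y →L[ℝ] Y :=
    (Tp - R.subtypeL ∘L ρ ∘L Tp) ∘L C.subtypeL ∘L (e.symm : R →L[ℝ] C) ∘L ρ with hNdef
  have hNapp : ∀ y : Y, N y = Tp ((e.symm (ρ y) : C) : X)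
      - ((ρ (Tp ((e.symm (ρ y) : C) : X)) : R) : Y) := fun y => rfl
  have hNTp : ∀ c : C, N (Tp (c : X)) = Tp (c : X) - (e c : Y) := by
    intro c
    rw [hNapp, he' c, ContinuousLinearEquiv.symm_apply_apply, he' c]
  have hNN : ∀ y : Y, N (N y) = 0 := by
    intro y
    have h2 : ρ (N y) = 0 := by
      rw [hNapp y, map_sub, hρR (ρ (Tp ((e.symm (ρ y) : C) : X))), sub_self]
    rw [hNapp (N y), h2]
    simp
  -- the automorphism u = 1 - N with inverse 1 + N
  set A : Y →L[ℝ] Y := ContinuousLinearMap.id ℝ Y - N with hAdef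
  set B : Y →L[ℝ] Y := ContinuousLinearMap.id ℝ Y + N with hBdef
  have hBA : Function.LeftInverse B A := by
    intro y
    simp only [hAdef, hBdef, ContinuousLinearMap.sub_apply, ContinuousLinearMap.add_apply,
      ContinuousLinearMap.id_apply, map_sub]
    rw [hNN]
    abel
  have hAB : Function.RightInverse B A := by
    intro y
    simp only [hAdef, hBdef, ContinuousLinearMap.sub_apply, ContinuousLinearMap.add_apply,
      ContinuousLinearMap.id_apply, map_add]
    rw [hNN]
    abel
  -- the straightened operator S
  set S : X →L[ℝ] Y := A ∘L Tp with hSdef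
  have hSapp : ∀ x : X, S x = Tp x - N (Tp x) := fun x => rfl
  have hSC : ∀ c : C, S (c : X) = (e c : Y) := by
    intro c
    rw [hSapp, hNTp c]
    abel
  -- image of C under S is R
  have hmapC : Submodule.map (S : X →ₗ[ℝ] Y) C = R := by
    ext y
    constructor
    · rintro ⟨x, hxC, rfl⟩
      rw [show (S : X →ₗ[ℝ] Y) x = S x from rfl, hSC ⟨x, hxC⟩]
      exact (e ⟨x, hxC⟩).2
    · intro hy
      exact ⟨(e.symm ⟨y, hy⟩ : C), (e.symm ⟨y, hy⟩).2, by
        rw [show (S : X →ₗ[ℝ] Y) _ = S ((e.symm ⟨y, hy⟩ : C) : X) from rfl,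
          hSC (e.symm ⟨y, hy⟩), ContinuousLinearEquiv.apply_symm_apply]⟩
  have hrangeS : LinearMap.range (S : X →ₗ[ℝ] Y)
      = R ⊔ Submodule.map (S : X →ₗ[ℝ] Y) K := by
    rw [LinearMap.range_eq_map, ← hC.sup_eq_top, Submodule.map_sup, hmapC, sup_comm]
  have hRle : R ≤ LinearMap.range (S : X →ₗ[ℝ] Y) := by rw [hrangeS]; exact le_sup_left
  -- auxiliary finite-rank map g
  set g : K →ₗ[ℝ] Y ⧸ R := R.mkQ ∘ₗ (S : X →ₗ[ℝ] Y) ∘ₗ K.subtype with hgdef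
  set πK : X →ₗ[ℝ] K := K.linearProjOfIsCompl C hC with hπK
  set πC : X →ₗ[ℝ] C := C.linearProjOfIsCompl K hC.symm with hπC
  have hdecomp : ∀ x : X, ((πK x : X) + (πC x : X) = x) :=
    fun x => Submodule.projection_add_projection_eq_self hC x
  -- the kernel equivalence
  have hmem : ∀ x : LinearMap.ker (S : X →ₗ[ℝ] Y), πK (x : X) ∈ LinearMap.ker g := by
    rintro ⟨x, hx⟩
    have hx' : S x = 0 := hx
    have hsum : S ((πK x : K) : X) + ((e (πC x) : R) : Y) = 0 := by
      rw [← hSC (πC x), ← map_add]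
      rw [hdecomp x]
      exact hx'
    have hSx : S ((πK x : K) : X) = - ((e (πC x) : R) : Y) :=
      eq_neg_of_add_eq_zero_left hsum
    simp only [LinearMap.mem_ker, hgdef, LinearMap.comp_apply, Submodule.subtype_apply]
    rw [show (S : X →ₗ[ℝ] Y) ((πK x : K) : X) = S ((πK x : K) : X) from rfl, hSx, map_neg,
      neg_eq_zero, Submodule.mkQ_apply, Submodule.Quotient.mk_eq_zero]
    exact (e (πC x)).2
  set θ : LinearMap.ker (S : X →ₗ[ℝ] Y) →ₗ[ℝ] LinearMap.ker g :=
    LinearMap.codRestrict (LinearMap.ker g) (πK ∘ₗ (LinearMap.ker (S : X →ₗ[ℝ] Y)).subtype) hmem with hθdef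
  have hθinj : Function.Injective θ := by
    rintro ⟨x, hx⟩ ⟨x', hx'⟩ hxx
    have h0 : πK x = πK x' := congrArg Subtype.val hxx
    -- reduce to the zero case
    have hd : x - x' ∈ C := by
      have : πK (x - x') = 0 := by rw [map_sub, h0, sub_self]
      exact (Submodule.linearProjOfIsCompl_apply_eq_zero_iff hC).mp this
    have hSd : S (x - x') = 0 := by
      rw [map_sub, show S x = 0 from hx, show S x' = 0 from hx', sub_self]
    have : ((e ⟨x - x', hd⟩ : R) : Y) = 0 := by rw [← hSC ⟨x - x', hd⟩]; exact hSd
    have h1 : e ⟨x - x', hd⟩ = 0 := Subtype.ext this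
    have h2 : (⟨x - x', hd⟩ : C) = 0 := by
      apply e.injective
      rw [h1, map_zero]
    have : x - x' = 0 := congrArg Subtype.val h2
    exact Subtype.ext (sub_eq_zero.mp this)
  have hθsurj : Function.Surjective θ := by
    rintro ⟨k, hk⟩
    have hk' : (S : X →ₗ[ℝ] Y) ((k : K) : X) ∈ R := by
      have := hk
      simp only [LinearMap.mem_ker, hgdef, LinearMap.comp_apply, Submodule.subtype_apply,
        Submodule.mkQ_apply, Submodule.Quotient.mk_eq_zero] at this
      exact this
    set c : C := e.symm ⟨(S : X →ₗ[ℝ] Y) ((k : K) : X), hk'⟩ with hcdef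
    have hxker : S (((k : K) : X) - (c : X)) = 0 := by
      rw [map_sub, hSC c, hcdef, ContinuousLinearEquiv.apply_symm_apply]
      exact sub_self _
    refine ⟨⟨(k : K) - (c : X), hxker⟩, ?_⟩
    apply Subtype.ext
    show πK (((k : K) : X) - (c : X)) = k
    rw [map_sub]
    rw [show πK ((k : K) : X) = k from Submodule.linearProjOfIsCompl_apply_left hC k]
    rw [show πK ((c : C) : X) = 0 from Submodule.linearProjOfIsCompl_apply_right hC c]
    rw [sub_zero]
  have equivKer : (LinearMap.ker (S : X →ₗ[ℝ] Y)) ≃ₗ[ℝ] (LinearMap.ker g) :=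
    LinearEquiv.ofBijective θ ⟨hθinj, hθsurj⟩
  haveI : FiniteDimensional ℝ (LinearMap.ker g) := inferInstance
  haveI hkerSfin : FiniteDimensional ℝ (LinearMap.ker (S : X →ₗ[ℝ] Y)) :=
    LinearEquiv.finiteDimensional equivKer.symm
  -- the cokernel equivalence
  have hmapQ : Submodule.map R.mkQ (LinearMap.range (S : X →ₗ[ℝ] Y)) = LinearMap.range g := by
    rw [hrangeS, Submodule.map_sup]
    have h1 : Submodule.map R.mkQ R = ⊥ := Submodule.mkQ_map_self R
    have h2 : LinearMap.range g = Submodule.map R.mkQ (Submodule.map (S : X →ₗ[ℝ] Y) K) := by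
      rw [hgdef, LinearMap.range_comp, LinearMap.range_comp, Submodule.range_subtype]
    rw [h1, ← h2, bot_sup_eq]
  have equiv1 : ((Y ⧸ R) ⧸ (LinearMap.range (S : X →ₗ[ℝ] Y)).map R.mkQ)
      ≃ₗ[ℝ] Y ⧸ LinearMap.range (S : X →ₗ[ℝ] Y) :=
    Submodule.quotientQuotientEquivQuotient R _ hRle
  have equiv2 : ((Y ⧸ R) ⧸ (LinearMap.range (S : X →ₗ[ℝ] Y)).map R.mkQ)
      ≃ₗ[ℝ] ((Y ⧸ R) ⧸ LinearMap.range g) :=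
    Submodule.quotEquivOfEq _ _ hmapQ
  have equivCoker : (Y ⧸ LinearMap.range (S : X →ₗ[ℝ] Y)) ≃ₗ[ℝ] ((Y ⧸ R) ⧸ LinearMap.range g) :=
    equiv1.symm.trans equiv2
  haveI hcokerSfin : FiniteDimensional ℝ (Y ⧸ LinearMap.range (S : X →ₗ[ℝ] Y)) :=
    LinearEquiv.finiteDimensional equivCoker.symm
  -- closedness of range S
  haveI : IsClosed (R : Set Y) := hRclosed
  have hmkQcont : Continuous (R.mkQ) :=
    AddMonoidHomClass.continuous_of_bound R.mkQ 1 fun y => by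
      simpa using Submodule.Quotient.norm_mk_le R y
  have hWqclosed : IsClosed ((LinearMap.range g : Submodule ℝ (Y ⧸ R)) : Set (Y ⧸ R)) :=
    (LinearMap.range g).closed_of_finiteDimensional
  have hcomap : Submodule.comap R.mkQ (LinearMap.range g) = LinearMap.range (S : X →ₗ[ℝ] Y) := by
    rw [← hmapQ, Submodule.comap_map_mkQ, sup_eq_right.mpr hRle]
  have hSrangeClosed : IsClosed ((LinearMap.range (S : X →ₗ[ℝ] Y) : Submodule ℝ Y) : Set Y) := by
    rw [← hcomap]
    have : ((Submodule.comap R.mkQ (LinearMap.range g) : Submodule ℝ Y) : Set Y)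
        = ⇑R.mkQ ⁻¹' ((LinearMap.range g : Submodule ℝ (Y ⧸ R)) : Set (Y ⧸ R)) := rfl
    rw [this]
    exact hWqclosed.preimage hmkQcont
  -- transfer back to Tp
  have hkerTp : LinearMap.ker (Tp : X →ₗ[ℝ] Y) = LinearMap.ker (S : X →ₗ[ℝ] Y) := by
    ext x
    simp only [LinearMap.mem_ker, ContinuousLinearMap.coe_coe]
    constructor
    · intro h
      show A (Tp x) = 0
      rw [h, map_zero]
    · intro h
      have h' : A (Tp x) = 0 := h
      have := congrArg B h'
      rw [hBA (Tp x), map_zero] at this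
      exact this
  set uE : Y ≃ₗ[ℝ] Y := (ContinuousLinearEquiv.equivOfInverse A B hBA hAB).toLinearEquiv with huE
  have hmapu : Submodule.map (uE : Y →ₗ[ℝ] Y) (LinearMap.range (Tp : X →ₗ[ℝ] Y))
      = LinearMap.range (S : X →ₗ[ℝ] Y) := by
    rw [show (uE : Y →ₗ[ℝ] Y) = (A : Y →ₗ[ℝ] Y) from rfl]
    rw [hSdef, ContinuousLinearMap.toLinearMap_comp, LinearMap.range_comp]
  have equivQuot : (Y ⧸ LinearMap.range (Tp : X →ₗ[ℝ] Y)) ≃ₗ[ℝ] (Y ⧸ LinearMap.range (S : X →ₗ[ℝ] Y)) :=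
    Submodule.Quotient.equiv _ _ uE hmapu
  have hrangeTpSet : ((LinearMap.range (Tp : X →ₗ[ℝ] Y) : Submodule ℝ Y) : Set Y)
      = ⇑A ⁻¹' ((LinearMap.range (S : X →ₗ[ℝ] Y) : Submodule ℝ Y) : Set Y) := by
    ext y
    simp only [Set.mem_preimage, SetLike.mem_coe, LinearMap.mem_range]
    constructor
    · rintro ⟨x, rfl⟩
      exact ⟨x, rfl⟩
    · rintro ⟨x, hx⟩
      refine ⟨x, ?_⟩
      have : A (Tp x) = A y := hx
      have := congrArg B this
      rwa [hBA, hBA] at this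
  refine ⟨?_, ?_, ?_, ?_⟩
  · rw [hkerTp]; exact hkerSfin
  · rw [hrangeTpSet]; exact hSrangeClosed.preimage A.continuous
  · exact LinearEquiv.finiteDimensional equivQuot.symm
  · -- index computation
    haveI : FiniteDimensional ℝ (Y ⧸ LinearMap.range (Tp : X →ₗ[ℝ] Y)) :=
      LinearEquiv.finiteDimensional equivQuot.symm
    have rn : Module.finrank ℝ (LinearMap.range g) + Module.finrank ℝ (LinearMap.ker g)
        = Module.finrank ℝ K := LinearMap.finrank_range_add_finrank_ker g
    have q1 : Module.finrank ℝ ((Y ⧸ R) ⧸ LinearMap.range g)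
        + Module.finrank ℝ (LinearMap.range g) = Module.finrank ℝ (Y ⧸ R) :=
      Submodule.finrank_quotient_add_finrank _
    have e1 : Module.finrank ℝ (LinearMap.ker (Tp : X →ₗ[ℝ] Y)) = Module.finrank ℝ (LinearMap.ker g) := by
      rw [hkerTp]; exact equivKer.finrank_eq
    have e2 : Module.finrank ℝ (Y ⧸ LinearMap.range (Tp : X →ₗ[ℝ] Y))
        = Module.finrank ℝ ((Y ⧸ R) ⧸ LinearMap.range g) :=
      (equivQuot.trans equivCoker).finrank_eq
    rw [e1, e2]
    omega


/-- A continuous linear map is Fredholm if it has finite-dimensional kernel and closed,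
finite-codimensional range. -/
def IsFredholmOperator {X Y : Type*}
    [NormedAddCommGroup X] [NormedSpace ℝ X]
    [NormedAddCommGroup Y] [NormedSpace ℝ Y]
    (T : X →L[ℝ] Y) : Prop :=
  FiniteDimensional ℝ (LinearMap.ker (T : X →ₗ[ℝ] Y)) ∧
  IsClosed (LinearMap.range (T : X →ₗ[ℝ] Y) : Set Y) ∧
  FiniteDimensional ℝ (Y ⧸ LinearMap.range (T : X →ₗ[ℝ] Y))

/-- The index of a (Fredholm) operator: `dim ker T - dim coker T`. -/
noncomputable def fredholmIndex {X Y : Type*}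
    [NormedAddCommGroup X] [NormedSpace ℝ X]
    [NormedAddCommGroup Y] [NormedSpace ℝ Y]
    (T : X →L[ℝ] Y) : ℤ :=
  (Module.finrank ℝ (LinearMap.ker (T : X →ₗ[ℝ] Y)) : ℤ) -
    (Module.finrank ℝ (Y ⧸ LinearMap.range (T : X →ₗ[ℝ] Y)) : ℤ)

/-- **Stability of the Fredholm property and the index along uniformly regular families.**
Let `T : P × X → Y` be a continuous family of continuous linear maps between Banach spaces
with `T₀` Fredholm, uniformly regular at `0` with respect to decompositions
`X = ker T₀ ⊕ C` and `Y = Q ⊕ im T₀`. Then `Tₚ` is Fredholm and `ind Tₚ = ind T₀` for all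
`p ∈ P`. -/
theorem fredholm_and_index_constant_of_uniformly_regular
    {E X Y : Type*}
    [NormedAddCommGroup E] [NormedSpace ℝ E]
    [NormedAddCommGroup X] [NormedSpace ℝ X] [CompleteSpace X]
    [NormedAddCommGroup Y] [NormedSpace ℝ Y] [CompleteSpace Y]
    (P : Set E) (hP : P ∈ nhds (0 : E))
    (T : E → (X →L[ℝ] Y))
    (hcont : Continuous fun px : E × X => T px.1 px.2)
    (hFred : IsFredholmOperator (T 0))
    (C : Submodule ℝ X) (Q : Submodule ℝ Y)
    (hC : IsCompl (LinearMap.ker (T 0 : X →ₗ[ℝ] Y)) C)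
    (hQ : IsCompl Q (LinearMap.range (T 0 : X →ₗ[ℝ] Y)))
    (hreg : ∀ p ∈ P, ∃ e : C ≃L[ℝ] LinearMap.range (T 0 : X →ₗ[ℝ] Y),
      ∀ c : C, (e c : Y) =
        ((Submodule.linearProjOfIsCompl (LinearMap.range (T 0 : X →ₗ[ℝ] Y)) Q hQ.symm) (T p (c : X)) : Y)) :
    ∀ p ∈ P, IsFredholmOperator (T p) ∧ fredholmIndex (T p) = fredholmIndex (T 0) := by
  intro p hp
  obtain ⟨e, he⟩ := hreg p hp
  haveI := hFred.1
  haveI := hFred.2.2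
  obtain ⟨h1, h2, h3, h4⟩ := fredholm_aux (LinearMap.ker (T 0 : X →ₗ[ℝ] Y)) C Q (LinearMap.range (T 0 : X →ₗ[ℝ] Y))
    hFred.2.1 hC hQ (T p) e he
  refine ⟨⟨h1, h2, h3⟩, ?_⟩
  unfold fredholmIndex
  exact h4
end

section
/- Let X, Y be Banach spaces with topological decompositions X = K ⊕ C and Y = Q ⊕ I, let f̂ : C → I be a topological isomorphism and f_sing : U → Q smooth on an open 0-neighborhood U ⊆ X with f_sing(0,·)|_{U∩C} = 0 and D f_sing(0) = 0. Suppose a compact group H acts continuously and linearly on X and Y, preserving the decompositions, and that f̂ and f_sing are H-equivariant and U is H-invariant. Then the zero set {x ∈ U : f̂(pr_C x) + f_sing(x) = 0} is H-invariant and equals {(x₁, 0) : x₁ ∈ K ∩ U-slice, f_sing(x₁, 0) = 0}, which is invariant under the H-action on K; consequently the quotient of the zero level set by H is homeomorphic to {x₁ ∈ V : s(x₁) = 0}/H, where V = U ∩ K and s = f_sing(·, 0) : V → Q is H-equivariant. -/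
/-- **Equivariant normal form: zero set and Kuranishi quotient.**
Let `X = K ⊕ C`, `Y = Q ⊕ I` be decompositions of Banach spaces invariant under linear
continuous actions of a compact group `H`, let `f̂ : C → I` be an `H`-equivariant
topological isomorphism and `f_sing : U → Q` an `H`-equivariant smooth map on an
`H`-invariant open `0`-neighborhood `U` with `f_sing(0,·)|_{U∩C} = 0` and
`D f_sing(0) = 0`. Then the zero set of `f = f̂ ∘ pr_C + f_sing` is `H`-invariant, equals
`{(x₁, 0) : f_sing(x₁,0) = 0}` (which is invariant under the `H`-action on `K`), and its
quotient by `H` is homeomorphic to `{x₁ ∈ V : s(x₁) = 0}/H` with `V = U ∩ K` and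
`s = f_sing(·, 0)`. -/
theorem equivariant_normal_form_zero_set_quotient
    {H K C Q I : Type*}
    [Group H] [TopologicalSpace H] [CompactSpace H] [IsTopologicalGroup H]
    [NormedAddCommGroup K] [NormedSpace ℝ K] [CompleteSpace K]
    [NormedAddCommGroup C] [NormedSpace ℝ C] [CompleteSpace C]
    [NormedAddCommGroup Q] [NormedSpace ℝ Q] [CompleteSpace Q]
    [NormedAddCommGroup I] [NormedSpace ℝ I] [CompleteSpace I]
    (ρK : H →* (K ≃L[ℝ] K)) (ρC : H →* (C ≃L[ℝ] C))
    (ρQ : H →* (Q ≃L[ℝ] Q)) (ρI : H →* (I ≃L[ℝ] I))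
    (hcK : Continuous fun p : H × K => ρK p.1 p.2)
    (hcC : Continuous fun p : H × C => ρC p.1 p.2)
    (hcQ : Continuous fun p : H × Q => ρQ p.1 p.2)
    (hcI : Continuous fun p : H × I => ρI p.1 p.2)
    (fhat : C ≃L[ℝ] I)
    (hfhatEquiv : ∀ (h : H) (c : C), fhat (ρC h c) = ρI h (fhat c))
    (U : Set (K × C)) (hUopen : IsOpen U) (h0U : (0 : K × C) ∈ U)
    (hUinv : ∀ h : H, ∀ x ∈ U, (ρK h x.1, ρC h x.2) ∈ U)
    (fsing : K × C → Q)
    (hsmooth : ContDiffOn ℝ (⊤ : ℕ∞) fsing U)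
    (hvanish : ∀ x₂ : C, ((0 : K), x₂) ∈ U → fsing (0, x₂) = 0)
    (hderiv0 : fderiv ℝ fsing 0 = 0)
    (hEquiv : ∀ h : H, ∀ x ∈ U, fsing (ρK h x.1, ρC h x.2) = ρQ h (fsing x)) :
    (∀ h : H, ∀ x : K × C, (x ∈ U ∧ fsing x = 0 ∧ fhat x.2 = 0) →
      ((ρK h x.1, ρC h x.2) ∈ U ∧ fsing (ρK h x.1, ρC h x.2) = 0 ∧
        fhat (ρC h x.2) = 0)) ∧
    ({x : K × C | x ∈ U ∧ fsing x = 0 ∧ fhat x.2 = 0} =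
      {x : K × C | x ∈ U ∧ x.2 = 0 ∧ fsing (x.1, 0) = 0}) ∧
    (∀ h : H, ∀ x₁ : K, ((x₁, (0 : C)) ∈ U ∧ fsing (x₁, 0) = 0) →
      ((ρK h x₁, (0 : C)) ∈ U ∧ fsing (ρK h x₁, 0) = 0)) ∧
    Nonempty
      ((Quot (fun x y : {x : K × C // x ∈ U ∧ fsing x = 0 ∧ fhat x.2 = 0} =>
          ∃ h : H, (y : K × C).1 = ρK h (x : K × C).1 ∧
            (y : K × C).2 = ρC h (x : K × C).2)) ≃ₜ
       (Quot (fun x y : {x₁ : K // (x₁, (0 : C)) ∈ U ∧ fsing (x₁, 0) = 0} =>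
          ∃ h : H, (y : K) = ρK h (x : K)))) := by

  have hz : ∀ x : K × C, fhat x.2 = 0 → x.2 = 0 := by
    intro x hx
    have := fhat.injective (by simpa using hx : fhat x.2 = fhat 0)
    simpa using this
  refine ⟨?_, ?_, ?_, ?_⟩
  · intro h x ⟨hU, hf, hh⟩
    have h2 : x.2 = 0 := hz x hh
    refine ⟨hUinv h x hU, ?_, ?_⟩
    · rw [hEquiv h x hU, hf, map_zero]
    · rw [h2, map_zero, map_zero]
  · ext x
    constructor
    · rintro ⟨hU, hf, hh⟩
      have h2 : x.2 = 0 := hz x hh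
      refine ⟨hU, h2, ?_⟩
      rw [← h2]; simpa using hf
    · rintro ⟨hU, h2, hf⟩
      refine ⟨hU, ?_, by rw [h2, map_zero]⟩
      have : (x.1, (0:C)) = x := by rw [← h2]
      rwa [this] at hf
  · intro h x₁ ⟨hU, hf⟩
    have hU' := hUinv h (x₁, 0) hU
    simp only [map_zero] at hU'
    refine ⟨hU', ?_⟩
    have := hEquiv h (x₁, 0) hU
    simp only [map_zero] at this
    rw [this, hf, map_zero]
  · set P : K × C → Prop := fun x => x ∈ U ∧ fsing x = 0 ∧ fhat x.2 = 0 with hP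
    set P' : K → Prop := fun x₁ => (x₁, (0 : C)) ∈ U ∧ fsing (x₁, 0) = 0 with hP'
    set r : {x // P x} → {x // P x} → Prop := fun x y =>
      ∃ h : H, (y : K × C).1 = ρK h (x : K × C).1 ∧ (y : K × C).2 = ρC h (x : K × C).2 with hr
    set r' : {x₁ // P' x₁} → {x₁ // P' x₁} → Prop := fun x y =>
      ∃ h : H, (y : K) = ρK h (x : K) with hr'
    have key : ∀ x : {x // P x}, (x : K × C).2 = 0 := fun x => hz _ x.2.2.2
    have fwdP : ∀ x : {x // P x}, P' (x : K × C).1 := by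
      intro x
      have h2 := key x
      have h1 : ((x : K × C).1, (0:C)) = (x : K × C) := by rw [← h2]
      exact ⟨h1 ▸ x.2.1, by rw [h1]; exact x.2.2.1⟩
    have bwdP : ∀ x : {x₁ // P' x₁}, P ((x : K), (0 : C)) := by
      intro x
      exact ⟨x.2.1, x.2.2, by simp⟩
    let F : Quot r → Quot r' := Quot.map (fun x => ⟨(x : K × C).1, fwdP x⟩)
      (by rintro x y ⟨h, h1, h2⟩; exact ⟨h, h1⟩)
    let G : Quot r' → Quot r := Quot.map (fun x => ⟨((x : K), 0), bwdP x⟩)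
      (by rintro x y ⟨h, h1⟩; exact ⟨h, h1, by simp⟩)
    refine ⟨⟨⟨F, G, ?_, ?_⟩, ?_, ?_⟩⟩
    · intro q
      induction q using Quot.ind with
      | _ x =>
        show Quot.mk r ⟨((x : K × C).1, 0), _⟩ = Quot.mk r x
        apply congrArg
        ext
        · rfl
        · exact (key x).symm
    · intro q
      induction q using Quot.ind with
      | _ x => rfl
    · exact continuous_quot_lift _
        (continuous_quot_mk.comp ((continuous_fst.comp continuous_subtype_val).subtype_mk _))
    · exact continuous_quot_lift _
        (continuous_quot_mk.comp ((continuous_subtype_val.prodMk continuous_const).subtype_mk _))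
end

section
/- Let X, Y be Banach spaces and let Φ : X ⊕ Z⁺ → Y ⊕ Z⁻ be an invertible continuous linear block operator of the form Φ(x, z⁺) = (T x + T⁺ z⁺, T⁻ x), where Z⁺ and Z⁻ are finite-dimensional. Then T : X → Y is a Fredholm operator, and ind T = dim Z⁻ − dim Z⁺. -/
set_option maxHeartbeats 1000000
set_option synthInstance.maxHeartbeats 400000

/-- **Fredholmness and index from an invertible block extension.**
Let `Φ : X × Z⁺ → Y × Z⁻`, `Φ(x, z⁺) = (T x + T⁺ z⁺, T⁻ x)`, be an invertible continuous
linear block operator between Banach spaces, with `Z⁺` and `Z⁻` finite-dimensional. Then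
`T : X → Y` is a Fredholm operator (finite-dimensional kernel and closed,
finite-codimensional range) and `ind T = dim Z⁻ − dim Z⁺`. -/
theorem fredholm_of_invertible_block_extension
    {X Y Zp Zm : Type*}
    [NormedAddCommGroup X] [NormedSpace ℝ X] [CompleteSpace X]
    [NormedAddCommGroup Y] [NormedSpace ℝ Y] [CompleteSpace Y]
    [NormedAddCommGroup Zp] [NormedSpace ℝ Zp] [FiniteDimensional ℝ Zp]
    [NormedAddCommGroup Zm] [NormedSpace ℝ Zm] [FiniteDimensional ℝ Zm]
    (T : X →L[ℝ] Y) (Tp : Zp →L[ℝ] Y) (Tm : X →L[ℝ] Zm)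
    (Φ : (X × Zp) ≃L[ℝ] (Y × Zm))
    (hΦ : ∀ p : X × Zp, Φ p = (T p.1 + Tp p.2, Tm p.1)) :
    FiniteDimensional ℝ (LinearMap.ker (T : X →ₗ[ℝ] Y)) ∧
    IsClosed (LinearMap.range (T : X →ₗ[ℝ] Y) : Set Y) ∧
    FiniteDimensional ℝ (Y ⧸ LinearMap.range (T : X →ₗ[ℝ] Y)) ∧
    (Module.finrank ℝ (LinearMap.ker (T : X →ₗ[ℝ] Y)) : ℤ) -
        (Module.finrank ℝ (Y ⧸ LinearMap.range (T : X →ₗ[ℝ] Y)) : ℤ) =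
      (Module.finrank ℝ Zm : ℤ) - (Module.finrank ℝ Zp : ℤ) := by
  classical
  -- the subspace W of Zp mapped by Tp into range T
  set W : Submodule ℝ Zp := (LinearMap.range (T : X →ₗ[ℝ] Y)).comap (Tp : Zp →ₗ[ℝ] Y) with hW
  -- the combined map S(x,z) = T x + Tp z
  set S : (X × Zp) →L[ℝ] Y := T.coprod Tp with hS
  have hSsurj : Function.Surjective S := by
    intro y
    refine ⟨Φ.symm (y, 0), ?_⟩
    have h := hΦ (Φ.symm (y, 0))
    rw [Φ.apply_symm_apply] at h
    have := congrArg Prod.fst h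
    simpa [hS] using this.symm
  -- A := ker S, isomorphic to Zm via (x,z) ↦ Tm x
  set A : Submodule ℝ (X × Zp) := LinearMap.ker (S : (X × Zp) →ₗ[ℝ] Y) with hA
  have memA : ∀ p : X × Zp, p ∈ A ↔ T p.1 + Tp p.2 = 0 := by
    intro p; simp [hA, hS, LinearMap.mem_ker]
  set f : A →ₗ[ℝ] Zm :=
    (Tm : X →ₗ[ℝ] Zm) ∘ₗ (LinearMap.fst ℝ X Zp) ∘ₗ A.subtype with hf
  have hfinj : Function.Injective f := by
    rw [injective_iff_map_eq_zero]
    rintro ⟨p, hp⟩ h0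
    have hphi : Φ p = 0 := by
      rw [hΦ p]
      have h1 : T p.1 + Tp p.2 = 0 := (memA p).mp hp
      have h2 : Tm p.1 = 0 := h0
      simp [h1, h2, Prod.ext_iff]
    have : p = 0 := by
      have := Φ.injective (by simpa using hphi)
      simpa using this
    exact Subtype.ext this
  have hfsurj : Function.Surjective f := by
    intro m
    have h := hΦ (Φ.symm (0, m))
    rw [Φ.apply_symm_apply] at h
    have h1 : T (Φ.symm (0, m)).1 + Tp (Φ.symm (0, m)).2 = 0 :=
      (congrArg Prod.fst h).symm
    have h2 : Tm (Φ.symm (0, m)).1 = m := (congrArg Prod.snd h).symm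
    exact ⟨⟨Φ.symm (0, m), (memA _).mpr h1⟩, h2⟩
  have eA : A ≃ₗ[ℝ] Zm := LinearEquiv.ofBijective f ⟨hfinj, hfsurj⟩
  have hAfd : FiniteDimensional ℝ A := Module.Finite.equiv eA.symm
  have hdimA : Module.finrank ℝ A = Module.finrank ℝ Zm := eA.finrank_eq
  -- the projection π : A → Zp
  set π : A →ₗ[ℝ] Zp := (LinearMap.snd ℝ X Zp) ∘ₗ A.subtype with hπ
  have hrangeπ : LinearMap.range π = W := by
    ext z
    constructor
    · rintro ⟨⟨p, hp⟩, rfl⟩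
      have h1 : T p.1 + Tp p.2 = 0 := (memA p).mp hp
      refine ⟨-p.1, ?_⟩
      show (T : X →ₗ[ℝ] Y) (-p.1) = (Tp : Zp →ₗ[ℝ] Y) p.2
      simp only [ContinuousLinearMap.coe_coe, map_neg]
      exact neg_eq_of_add_eq_zero_right h1
    · rintro ⟨x, hx⟩
      have hx' : T x = Tp z := hx
      refine ⟨⟨(-x, z), (memA _).mpr ?_⟩, rfl⟩
      rw [map_neg, hx']
      simp
  -- ker π ≃ ker T
  set g : LinearMap.ker π →ₗ[ℝ] LinearMap.ker (T : X →ₗ[ℝ] Y) :=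
    LinearMap.codRestrict (LinearMap.ker (T : X →ₗ[ℝ] Y))
      ((LinearMap.fst ℝ X Zp) ∘ₗ A.subtype ∘ₗ (LinearMap.ker π).subtype)
      (by
        rintro ⟨⟨p, hp⟩, hz⟩
        have hz' : p.2 = 0 := hz
        have h1 : T p.1 + Tp p.2 = 0 := (memA p).mp hp
        simp only [hz', map_zero, add_zero] at h1
        simpa [LinearMap.mem_ker] using h1) with hg
  have hgbij : Function.Bijective g := by
    constructor
    · rw [injective_iff_map_eq_zero]
      rintro ⟨⟨p, hp⟩, hz⟩ h0
      have hx : p.1 = 0 := congrArg Subtype.val h0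
      have hz' : p.2 = 0 := hz
      apply Subtype.ext; apply Subtype.ext
      exact Prod.ext hx hz'
    · rintro ⟨x, hx⟩
      have hxk : T x = 0 := hx
      refine ⟨⟨⟨(x, 0), (memA _).mpr (by simp [hxk])⟩, ?_⟩, rfl⟩
      simp [LinearMap.mem_ker, hπ]
  have eK : (LinearMap.ker π) ≃ₗ[ℝ] (LinearMap.ker (T : X →ₗ[ℝ] Y)) := LinearEquiv.ofBijective g hgbij
  have hkerfd : FiniteDimensional ℝ (LinearMap.ker (T : X →ₗ[ℝ] Y)) := Module.Finite.equiv eK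
  -- rank-nullity on π
  have hrn := LinearMap.finrank_range_add_finrank_ker π
  have hek : Module.finrank ℝ (LinearMap.ker π) = Module.finrank ℝ (LinearMap.ker (T : X →ₗ[ℝ] Y)) :=
    eK.finrank_eq
  rw [hrangeπ, hdimA, hek] at hrn
  -- hrn : finrank W + finrank (ker T) = finrank Zm
  -- cokernel
  set q : Zp →ₗ[ℝ] (Y ⧸ LinearMap.range (T : X →ₗ[ℝ] Y)) :=
    (LinearMap.range (T : X →ₗ[ℝ] Y)).mkQ ∘ₗ (Tp : Zp →ₗ[ℝ] Y) with hq
  have hqsurj : Function.Surjective q := by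
    intro c
    obtain ⟨y, rfl⟩ := (LinearMap.range (T : X →ₗ[ℝ] Y)).mkQ_surjective c
    obtain ⟨p, hp⟩ := hSsurj y
    refine ⟨p.2, ?_⟩
    have : T p.1 + Tp p.2 = y := by simpa [hS] using hp
    calc q p.2 = (LinearMap.range (T : X →ₗ[ℝ] Y)).mkQ (Tp p.2) := rfl
      _ = (LinearMap.range (T : X →ₗ[ℝ] Y)).mkQ (T p.1 + Tp p.2) := by
          have h0 : (LinearMap.range (T : X →ₗ[ℝ] Y)).mkQ (T p.1) = 0 := by
            rw [Submodule.mkQ_apply, Submodule.Quotient.mk_eq_zero]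
            exact LinearMap.mem_range_self (T : X →ₗ[ℝ] Y) p.1
          rw [map_add, h0, zero_add]
      _ = (LinearMap.range (T : X →ₗ[ℝ] Y)).mkQ y := by rw [this]
  have hkerq : LinearMap.ker q = W := by
    ext z
    simp [hq, hW, LinearMap.mem_ker, Submodule.Quotient.mk_eq_zero]
  have eQ : (Zp ⧸ W) ≃ₗ[ℝ] (Y ⧸ LinearMap.range (T : X →ₗ[ℝ] Y)) := by
    rw [← hkerq]
    exact q.quotKerEquivOfSurjective hqsurj
  have hcofd : FiniteDimensional ℝ (Y ⧸ LinearMap.range (T : X →ₗ[ℝ] Y)) := Module.Finite.equiv eQ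
  have hco : Module.finrank ℝ (Y ⧸ LinearMap.range (T : X →ₗ[ℝ] Y)) = Module.finrank ℝ (Zp ⧸ W) :=
    eQ.symm.finrank_eq
  have hquot := Submodule.finrank_quotient_add_finrank W
  -- closedness of range T
  have hpre : S ⁻¹' (LinearMap.range (T : X →ₗ[ℝ] Y) : Set Y) = Set.univ ×ˢ (W : Set Zp) := by
    ext p
    simp only [Set.mem_preimage, SetLike.mem_coe, Set.mem_prod, Set.mem_univ, true_and,
      hW, Submodule.mem_comap, LinearMap.mem_range, ContinuousLinearMap.coe_coe]
    constructor
    · rintro ⟨x, hx⟩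
      refine ⟨x - p.1, ?_⟩
      have : S p = T p.1 + Tp p.2 := by simp [hS]
      rw [this] at hx
      rw [map_sub, hx]; abel
    · rintro ⟨x, hx⟩
      refine ⟨x + p.1, ?_⟩
      rw [map_add, hx]
      simp only [hS, ContinuousLinearMap.coprod_apply, ContinuousLinearMap.coe_coe]
      abel
  have hWclosed : IsClosed (W : Set Zp) := Submodule.closed_of_finiteDimensional W
  have hclosed : IsClosed (LinearMap.range (T : X →ₗ[ℝ] Y) : Set Y) := by
    rw [← isOpen_compl_iff]
    have himg : (LinearMap.range (T : X →ₗ[ℝ] Y) : Set Y)ᶜ = S '' (S ⁻¹' (LinearMap.range (T : X →ₗ[ℝ] Y) : Set Y)ᶜ) :=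
      (Set.image_preimage_eq _ hSsurj).symm
    rw [himg, Set.preimage_compl, hpre]
    exact S.isOpenMap hSsurj _ (isClosed_univ.prod hWclosed).isOpen_compl
  refine ⟨hkerfd, hclosed, hcofd, ?_⟩
  rw [hco]
  have h2 : Module.finrank ℝ (Zp ⧸ W) + Module.finrank ℝ W = Module.finrank ℝ Zp := hquot
  omega
end
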